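/- arXiv:2505.13853 — 6 statements merged into one kernel-verified Lean document; each statement's English description precedes it below -/
import Mathlib

section
/- The three Hamiltonian functions h1(q,p) = (1/2)∑_{i=1}^n q_i², h2(q,p) = -(1/2)∑_{i=1}^n q_i p_i, h3(q,p) = (1/2)∑_{i=1}^n (p_i² + c_i/q_i²) on T*ℝⁿ (with q_i ≠ 0 where c_i ≠ 0) satisfy the Poisson bracket relations {h1,h2} = -h1, {h1,h3} = -2h2, {h2,h3} = -h3 with respect to the canonical Poisson bracket, and hence span a Lie algebra isomorphic to sl(2,ℝ). -/
/-- Partial derivative of a function on `Fin k → ℝ` in the `i`-th coordinate. -/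
noncomputable def pd {k : ℕ} (f : (Fin k → ℝ) → ℝ) (x : Fin k → ℝ) (i : Fin k) : ℝ :=
  deriv (fun t => f (Function.update x i t)) (x i)

/-- Canonical Poisson bracket on `T*ℝⁿ`:
`{f,g} = ∑ i (∂f/∂q_i ∂g/∂p_i − ∂g/∂q_i ∂f/∂p_i)`. -/
noncomputable def pbracket (n : ℕ) (f g : (Fin n → ℝ) → (Fin n → ℝ) → ℝ)
    (q p : Fin n → ℝ) : ℝ :=
  ∑ i, (pd (fun q' => f q' p) q i * pd (g q) p i -
        pd (fun q' => g q' p) q i * pd (f q) p i)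

lemma sum_update {k : ℕ} (g : ℝ → ℝ) (x : Fin k → ℝ) (i : Fin k) (t : ℝ) :
    ∑ j, g (Function.update x i t j) = g t + ∑ j ∈ Finset.univ \ {i}, g (x j) := by
  have h : ∀ j, g (Function.update x i t j) = Function.update (fun j => g (x j)) i (g t) j := by
    intro j
    by_cases hj : j = i <;> simp [Function.update, hj]
  simp only [h]
  exact Finset.sum_update_of_mem (Finset.mem_univ i) (fun j => g (x j)) (g t)

lemma pd_const {k : ℕ} (a : ℝ) (x : Fin k → ℝ) (i : Fin k) :
    pd (fun _ => a) x i = 0 := by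
  simp [pd]

lemma pd_h1q {k : ℕ} (x : Fin k → ℝ) (i : Fin k) :
    pd (fun y => (1/2:ℝ) * ∑ j, (y j)^2) x i = x i := by
  have h : (fun t : ℝ => (1/2:ℝ) * ∑ j, (Function.update x i t j)^2)
      = fun t => (1/2:ℝ) * (t^2 + ∑ j ∈ Finset.univ \ {i}, (x j)^2) := by
    funext t; congr 1; exact sum_update (fun s => s^2) x i t
  rw [pd, h]
  simp [deriv_const_mul_field', deriv_add_const']

lemma pd_h2q {k : ℕ} (p x : Fin k → ℝ) (i : Fin k) :
    pd (fun y => -((1/2:ℝ) * ∑ j, y j * p j)) x i = -(1/2) * p i := by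
  have h : (fun t : ℝ => -((1/2:ℝ) * ∑ j, Function.update x i t j * p j))
      = fun t => -((1/2:ℝ) * (t * p i + ∑ j ∈ Finset.univ \ {i}, x j * p j)) := by
    funext t; congr 2
    have h2 : ∀ j, Function.update x i t j * p j
        = Function.update (fun j => x j * p j) i (t * p i) j := by
      intro j; by_cases hj : j = i <;> simp [Function.update, hj]
    simp only [h2]
    exact Finset.sum_update_of_mem (Finset.mem_univ i) (fun j => x j * p j) (t * p i)
  rw [pd, h]
  simp [deriv_const_mul_field', deriv_add_const', deriv_mul_const_field']

lemma pd_h2p {k : ℕ} (q x : Fin k → ℝ) (i : Fin k) :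
    pd (fun y => -((1/2:ℝ) * ∑ j, q j * y j)) x i = -(1/2) * q i := by
  have h : (fun t : ℝ => -((1/2:ℝ) * ∑ j, q j * Function.update x i t j))
      = fun t => -((1/2:ℝ) * (t * q i + ∑ j ∈ Finset.univ \ {i}, q j * x j)) := by
    funext t; congr 2
    have h2 : ∀ j, q j * Function.update x i t j
        = Function.update (fun j => q j * x j) i (t * q i) j := by
      intro j; by_cases hj : j = i <;> simp [Function.update, hj, mul_comm]
    simp only [h2]
    exact Finset.sum_update_of_mem (Finset.mem_univ i) (fun j => q j * x j) (t * q i)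
  rw [pd, h]
  simp [deriv_const_mul_field', deriv_add_const', deriv_mul_const_field']

lemma pd_h3p {k : ℕ} (c q x : Fin k → ℝ) (i : Fin k) :
    pd (fun y => (1/2:ℝ) * ∑ j, ((y j)^2 + c j / (q j)^2)) x i = x i := by
  have h : (fun t : ℝ => (1/2:ℝ) * ∑ j, ((Function.update x i t j)^2 + c j / (q j)^2))
      = fun t => (1/2:ℝ) * ((t^2 + c i / (q i)^2) + ∑ j ∈ Finset.univ \ {i}, ((x j)^2 + c j / (q j)^2)) := by
    funext t; congr 1
    have h2 : ∀ j, (Function.update x i t j)^2 + c j / (q j)^2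
        = Function.update (fun j => (x j)^2 + c j / (q j)^2) i (t^2 + c i / (q i)^2) j := by
      intro j; by_cases hj : j = i <;> simp [Function.update, hj]
    simp only [h2]
    exact Finset.sum_update_of_mem (Finset.mem_univ i) (fun j => (x j)^2 + c j / (q j)^2) (t^2 + c i / (q i)^2)
  rw [pd, h]
  simp [deriv_const_mul_field', deriv_add_const']

lemma pd_h3q {k : ℕ} (c p x : Fin k → ℝ) (i : Fin k) (hx : c i ≠ 0 → x i ≠ 0) :
    pd (fun y => (1/2:ℝ) * ∑ j, ((p j)^2 + c j / (y j)^2)) x i = -(c i) / (x i)^3 := by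
  have h : (fun t : ℝ => (1/2:ℝ) * ∑ j, ((p j)^2 + c j / (Function.update x i t j)^2))
      = fun t => (1/2:ℝ) * (((p i)^2 + c i / t^2) + ∑ j ∈ Finset.univ \ {i}, ((p j)^2 + c j / (x j)^2)) := by
    funext t; congr 1
    have h2 : ∀ j, (p j)^2 + c j / (Function.update x i t j)^2
        = Function.update (fun j => (p j)^2 + c j / (x j)^2) i ((p i)^2 + c i / t^2) j := by
      intro j; by_cases hj : j = i <;> simp [Function.update, hj]
    simp only [h2]
    exact Finset.sum_update_of_mem (Finset.mem_univ i) (fun j => (p j)^2 + c j / (x j)^2) ((p i)^2 + c i / t^2)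
  rw [pd, h]
  by_cases hc : c i = 0
  · simp [hc]
  · have hxi := hx hc
    have hd : HasDerivAt (fun t : ℝ => (1/2:ℝ) * (((p i)^2 + c i / t^2) + ∑ j ∈ Finset.univ \ {i}, ((p j)^2 + c j / (x j)^2)))
        (-(c i) / (x i)^3) (x i) := by
      have h1 : HasDerivAt (fun t : ℝ => t^2) (2 * x i) (x i) := by
        simpa using hasDerivAt_pow 2 (x i)
      have h2 : HasDerivAt (fun t : ℝ => (t^2)⁻¹) (-(2 * x i) / ((x i)^2)^2) (x i) :=
        h1.inv (pow_ne_zero 2 hxi)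
      have h3 := ((h2.const_mul (c i)).const_add ((p i)^2)).add_const
        (∑ j ∈ Finset.univ \ {i}, ((p j)^2 + c j / (x j)^2))
      have h4 := h3.const_mul (1/2 : ℝ)
      have h5 : (fun t : ℝ => (1/2:ℝ) * (((p i)^2 + c i / t^2) + ∑ j ∈ Finset.univ \ {i}, ((p j)^2 + c j / (x j)^2)))
          = fun y : ℝ => (1/2:ℝ) * ((p i)^2 + c i * (y^2)⁻¹ + ∑ j ∈ Finset.univ \ {i}, ((p j)^2 + c j / (x j)^2)) := by
        funext t; simp only [div_eq_mul_inv]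
      rw [h5]
      have hval : (1/2:ℝ) * (c i * (-(2 * x i) / ((x i)^2)^2)) = -(c i) / (x i)^3 := by
        field_simp
      rw [← hval]
      exact h4
    rw [hd.deriv]

/-- The Smorodinsky–Winternitz Hamiltonian functions
`h1 = (1/2)∑ q_i²`, `h2 = -(1/2)∑ q_i p_i`, `h3 = (1/2)∑ (p_i² + c_i/q_i²)`
satisfy `{h1,h2} = -h1`, `{h1,h3} = -2 h2`, `{h2,h3} = -h3`
(on the open set where `q_i ≠ 0` whenever `c_i ≠ 0`); hence they span a Lie
algebra of functions isomorphic to `sl(2,ℝ)`. -/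
theorem sw_functions_sl2 (n : ℕ) (c : Fin n → ℝ)
    (h1 h2 h3 : (Fin n → ℝ) → (Fin n → ℝ) → ℝ)
    (hh1 : h1 = fun q _ => (1 / 2) * ∑ i, (q i) ^ 2)
    (hh2 : h2 = fun q p => -((1 / 2) * ∑ i, q i * p i))
    (hh3 : h3 = fun q p => (1 / 2) * ∑ i, ((p i) ^ 2 + c i / (q i) ^ 2))
    (q p : Fin n → ℝ) (hq : ∀ i, c i ≠ 0 → q i ≠ 0) :
    pbracket n h1 h2 q p = -(h1 q p) ∧
    pbracket n h1 h3 q p = -2 * h2 q p ∧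
    pbracket n h2 h3 q p = -(h3 q p) := by
  subst hh1 hh2 hh3
  have e1q : ∀ i, pd (fun q' => (1/2:ℝ) * ∑ j, (q' j)^2) q i = q i := fun i => pd_h1q q i
  have e1p : ∀ i, pd (fun _ : Fin n → ℝ => (1/2:ℝ) * ∑ j, (q j)^2) p i = 0 :=
    fun i => pd_const _ p i
  have e2q : ∀ i, pd (fun q' => -((1/2:ℝ) * ∑ j, q' j * p j)) q i = -(1/2) * p i :=
    fun i => pd_h2q p q i
  have e2p : ∀ i, pd (fun p' => -((1/2:ℝ) * ∑ j, q j * p' j)) p i = -(1/2) * q i :=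
    fun i => pd_h2p q p i
  have e3q : ∀ i, pd (fun q' => (1/2:ℝ) * ∑ j, ((p j)^2 + c j / (q' j)^2)) q i
      = -(c i) / (q i)^3 := fun i => pd_h3q c p q i (hq i)
  have e3p : ∀ i, pd (fun p' => (1/2:ℝ) * ∑ j, ((p' j)^2 + c j / (q j)^2)) p i = p i :=
    fun i => pd_h3p c q p i
  refine ⟨?_, ?_, ?_⟩
  · show (∑ i, (pd (fun q' => (1/2:ℝ) * ∑ j, (q' j)^2) q i *
        pd (fun p' => -((1/2:ℝ) * ∑ j, q j * p' j)) p i -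
        pd (fun q' => -((1/2:ℝ) * ∑ j, q' j * p j)) q i *
        pd (fun _ : Fin n → ℝ => (1/2:ℝ) * ∑ j, (q j)^2) p i)) = _
    simp only [e1q, e1p, e2q, e2p, mul_zero, sub_zero]
    rw [Finset.mul_sum, ← Finset.sum_neg_distrib]
    exact Finset.sum_congr rfl fun i _ => by ring
  · show (∑ i, (pd (fun q' => (1/2:ℝ) * ∑ j, (q' j)^2) q i *
        pd (fun p' => (1/2:ℝ) * ∑ j, ((p' j)^2 + c j / (q j)^2)) p i -
        pd (fun q' => (1/2:ℝ) * ∑ j, ((p j)^2 + c j / (q' j)^2)) q i *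
        pd (fun _ : Fin n → ℝ => (1/2:ℝ) * ∑ j, (q j)^2) p i)) = _
    simp only [e1q, e1p, e3q, e3p, mul_zero, sub_zero]
    ring
  · show (∑ i, (pd (fun q' => -((1/2:ℝ) * ∑ j, q' j * p j)) q i *
        pd (fun p' => (1/2:ℝ) * ∑ j, ((p' j)^2 + c j / (q j)^2)) p i -
        pd (fun q' => (1/2:ℝ) * ∑ j, ((p j)^2 + c j / (q' j)^2)) q i *
        pd (fun p' => -((1/2:ℝ) * ∑ j, q j * p' j)) p i)) = _
    simp only [e2q, e2p, e3q, e3p]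
    rw [Finset.mul_sum, ← Finset.sum_neg_distrib]
    refine Finset.sum_congr rfl fun i _ => ?_
    by_cases hc : c i = 0
    · simp [hc]; ring
    · have hqi := hq i hc
      field_simp
      ring
end

section
/- The vector fields X1 = -∑_i q_i ∂/∂p_i, X2 = (1/2)∑_i (p_i ∂/∂p_i − q_i ∂/∂q_i), X3 = ∑_i (p_i ∂/∂q_i + (c_i/q_i³) ∂/∂p_i) on T*ℝⁿ satisfy the commutation relations [X1,X2] = X1, [X1,X3] = 2X2, [X2,X3] = X3, hence span a Lie algebra of vector fields isomorphic to sl(2,ℝ). -/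
/-- Commutator (Lie bracket) of two vector fields on a normed space,
`[X,Y](x) = DY_x(X(x)) − DX_x(Y(x))`, i.e. `[X,Y]^i = X^j ∂_j Y^i − Y^j ∂_j X^i`. -/
noncomputable def vbracket {E : Type*} [NormedAddCommGroup E] [NormedSpace ℝ E]
    (X Y : E → E) (x : E) : E :=
  fderiv ℝ Y x (X x) - fderiv ℝ X x (Y x)

/-- The vector fields `X1 = -∑ q_i ∂/∂p_i`, `X2 = (1/2)∑ (p_i ∂/∂p_i − q_i ∂/∂q_i)`,
`X3 = ∑ (p_i ∂/∂q_i + (c_i/q_i³) ∂/∂p_i)` on `T*ℝⁿ` satisfy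
`[X1,X2] = X1`, `[X1,X3] = 2X2`, `[X2,X3] = X3` (on the open set where
`q_i ≠ 0` whenever `c_i ≠ 0`); hence they span a Lie algebra of vector fields
isomorphic to `sl(2,ℝ)`. A point of `T*ℝⁿ` is a pair `(q, p)`. -/
theorem sw_vector_fields_sl2 (n : ℕ) (c : Fin n → ℝ)
    (X1 X2 X3 : (Fin n → ℝ) × (Fin n → ℝ) → (Fin n → ℝ) × (Fin n → ℝ))
    (hX1 : X1 = fun x => (0, fun i => -(x.1 i)))
    (hX2 : X2 = fun x => (fun i => -(1 / 2) * x.1 i, fun i => (1 / 2) * x.2 i))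
    (hX3 : X3 = fun x => (x.2, fun i => c i / (x.1 i) ^ 3))
    (x : (Fin n → ℝ) × (Fin n → ℝ)) (hq : ∀ i, c i ≠ 0 → x.1 i ≠ 0) :
    vbracket X1 X2 x = X1 x ∧
    vbracket X1 X3 x = (2 : ℝ) • X2 x ∧
    vbracket X2 X3 x = X3 x := by
  subst hX1 hX2 hX3
  set P : Fin n → ((Fin n → ℝ) × (Fin n → ℝ)) →L[ℝ] ℝ := fun i =>
    (ContinuousLinearMap.proj i).comp (ContinuousLinearMap.fst ℝ (Fin n → ℝ) (Fin n → ℝ)) with hP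
  set Q : Fin n → ((Fin n → ℝ) × (Fin n → ℝ)) →L[ℝ] ℝ := fun i =>
    (ContinuousLinearMap.proj i).comp (ContinuousLinearMap.snd ℝ (Fin n → ℝ) (Fin n → ℝ)) with hQ
  have hPd : ∀ (y : (Fin n → ℝ) × (Fin n → ℝ)) i, HasFDerivAt (fun z : (Fin n → ℝ) × (Fin n → ℝ) => z.1 i) (P i) y :=
    fun y i => (P i).hasFDerivAt
  have hQd : ∀ (y : (Fin n → ℝ) × (Fin n → ℝ)) i, HasFDerivAt (fun z : (Fin n → ℝ) × (Fin n → ℝ) => z.2 i) (Q i) y :=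
    fun y i => (Q i).hasFDerivAt
  have f1 : fderiv ℝ (fun x : (Fin n → ℝ) × (Fin n → ℝ) => ((0 : Fin n → ℝ), fun i => -(x.1 i))) x
      = ContinuousLinearMap.prod 0 (ContinuousLinearMap.pi fun i => -(P i)) :=
    HasFDerivAt.fderiv <|
      HasFDerivAt.prodMk (hasFDerivAt_const _ _) (hasFDerivAt_pi.2 fun i => (hPd x i).neg)
  have f2 : fderiv ℝ (fun x : (Fin n → ℝ) × (Fin n → ℝ) =>
        ((fun i => -(1 / 2) * x.1 i : Fin n → ℝ), (fun i => (1 / 2) * x.2 i : Fin n → ℝ))) x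
      = ContinuousLinearMap.prod
          (ContinuousLinearMap.pi fun i => (-(1/2) : ℝ) • P i)
          (ContinuousLinearMap.pi fun i => ((1/2) : ℝ) • Q i) :=
    HasFDerivAt.fderiv <|
      HasFDerivAt.prodMk (hasFDerivAt_pi.2 fun i => (hPd x i).const_mul _)
      (hasFDerivAt_pi.2 fun i => (hQd x i).const_mul _)
  have f3 : fderiv ℝ (fun x : (Fin n → ℝ) × (Fin n → ℝ) =>
        (x.2, (fun i => c i / (x.1 i) ^ 3 : Fin n → ℝ))) x
      = ContinuousLinearMap.prod (ContinuousLinearMap.snd ℝ (Fin n → ℝ) (Fin n → ℝ))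
          (ContinuousLinearMap.pi fun i => (-3 * c i / (x.1 i) ^ 4 : ℝ) • P i) := by
    have hcomp : ∀ i, HasFDerivAt (fun z : (Fin n → ℝ) × (Fin n → ℝ) => c i / (z.1 i) ^ 3)
        ((-3 * c i / (x.1 i) ^ 4 : ℝ) • P i) x := by
      intro i
      by_cases hc : c i = 0
      · have h0 : (fun z : (Fin n → ℝ) × (Fin n → ℝ) => c i / (z.1 i) ^ 3) = fun _ => (0 : ℝ) := by
          funext z; simp [hc]
        have h1 : (-3 * c i / (x.1 i) ^ 4 : ℝ) • P i = 0 := by simp [hc]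
        rw [h0, h1]
        exact hasFDerivAt_const _ _
      · have hx : x.1 i ≠ 0 := hq i hc
        have hg : HasDerivAt (fun t : ℝ => c i / t ^ 3)
            (-3 * c i / (x.1 i) ^ 4) (x.1 i) := by
          have h1 : HasDerivAt (fun t : ℝ => t ^ 3) (3 * (x.1 i) ^ 2) (x.1 i) := by
            simpa using hasDerivAt_pow 3 (x.1 i)
          have h2 := (hasDerivAt_const (x.1 i) (c i)).div h1 (pow_ne_zero 3 hx)
          refine HasDerivAt.congr_deriv (f := fun t : ℝ => c i / t ^ 3) h2 ?_
          field_simp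
          ring
        exact HasDerivAt.comp_hasFDerivAt (h₂ := fun t : ℝ => c i / t ^ 3) x hg (hPd x i)
    exact HasFDerivAt.fderiv <|
      HasFDerivAt.prodMk hasFDerivAt_snd (hasFDerivAt_pi.2 hcomp)
  refine ⟨?_, ?_, ?_⟩
  · simp only [vbracket, f1, f2]
    refine Prod.ext ?_ ?_ <;> funext i <;>
      simp [ContinuousLinearMap.pi_apply, hP, hQ] <;> ring
  · simp only [vbracket, f1, f3]
    refine Prod.ext ?_ ?_ <;> funext i <;>
      simp [ContinuousLinearMap.pi_apply, hP, hQ] <;> ring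
  · simp only [vbracket, f2, f3]
    refine Prod.ext ?_ ?_ <;> funext i <;>
      simp [ContinuousLinearMap.pi_apply, hP, hQ]
    · ring
    · by_cases hc : c i = 0
      · simp [hc]
      · have hx : x.1 i ≠ 0 := hq i hc
        field_simp
        ring
end

section
/- The function Ψ(x₁,x₂,x₃;k) = (x₁(x₃−x₂) + k·x₃(x₁−x₂)) / ((x₃−x₂) + k(x₁−x₂)) is a superposition rule for the Riccati equation: if x₁(t), x₂(t), x₃(t) are three distinct solutions of dx/dt = b₁(t) + b₂(t)x + b₃(t)x², then for any constant k, the function x(t) = Ψ(x₁(t),x₂(t),x₃(t);k) is also a solution, wherever the denominator is nonzero. -/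
/-- Superposition rule for the Riccati equation: if `x₁, x₂, x₃` are three
pairwise distinct solutions of `dx/dt = b₁(t) + b₂(t)x + b₃(t)x²`, then for any
constant `k` the function
`x = (x₁(x₃−x₂) + k x₃(x₁−x₂)) / ((x₃−x₂) + k(x₁−x₂))`
is also a solution, wherever the denominator is nonzero. -/
theorem riccati_superposition_rule
    (b1 b2 b3 x1 x2 x3 : ℝ → ℝ)
    (hb1 : Continuous b1) (hb2 : Continuous b2) (hb3 : Continuous b3)
    (hd1 : Differentiable ℝ x1) (hd2 : Differentiable ℝ x2)
    (hd3 : Differentiable ℝ x3)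
    (he1 : ∀ t, deriv x1 t = b1 t + b2 t * x1 t + b3 t * (x1 t) ^ 2)
    (he2 : ∀ t, deriv x2 t = b1 t + b2 t * x2 t + b3 t * (x2 t) ^ 2)
    (he3 : ∀ t, deriv x3 t = b1 t + b2 t * x3 t + b3 t * (x3 t) ^ 2)
    (hdist : ∀ t, x1 t ≠ x2 t ∧ x1 t ≠ x3 t ∧ x2 t ≠ x3 t)
    (k : ℝ) (x : ℝ → ℝ)
    (hx : x = fun s =>
      (x1 s * (x3 s - x2 s) + k * x3 s * (x1 s - x2 s)) /
        ((x3 s - x2 s) + k * (x1 s - x2 s)))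
    (t : ℝ) (hden : (x3 t - x2 t) + k * (x1 t - x2 t) ≠ 0) :
    HasDerivAt x (b1 t + b2 t * x t + b3 t * (x t) ^ 2) t := by
  subst hx
  have h1 : HasDerivAt x1 (b1 t + b2 t * x1 t + b3 t * (x1 t) ^ 2) t :=
    he1 t ▸ (hd1 t).hasDerivAt
  have h2 : HasDerivAt x2 (b1 t + b2 t * x2 t + b3 t * (x2 t) ^ 2) t :=
    he2 t ▸ (hd2 t).hasDerivAt
  have h3 : HasDerivAt x3 (b1 t + b2 t * x3 t + b3 t * (x3 t) ^ 2) t :=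
    he3 t ▸ (hd3 t).hasDerivAt
  have hN := (h1.mul (h3.sub h2)).add (((hasDerivAt_const t k).mul h3).mul (h1.sub h2))
  have hD := (h3.sub h2).add ((hasDerivAt_const t k).mul (h1.sub h2))
  have := hN.div hD hden
  refine this.congr_deriv ?_
  simp only [Pi.add_apply, Pi.sub_apply, Pi.mul_apply]
  field_simp
  ring
end

section
/- For each k with 2 ≤ k ≤ n, the function I_L^(k)(q,p) = ∑_{1≤i<j≤k} [ (q_i p_j − q_j p_i)² + c_i q_j²/q_i² + c_j q_i²/q_j² ] + ∑_{i=1}^k c_i equals h₋^(k) h₊^(k) − (h₃^(k))², where h₋^(k) = ∑_{i=1}^k q_i², h₊^(k) = ∑_{i=1}^k (p_i² + c_i/q_i²), h₃^(k) = ∑_{i=1}^k q_i p_i. -/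
open Finset

/-- For `2 ≤ k ≤ n`, the left Casimir function
`I_L^(k) = ∑_{1≤i<j≤k} [(q_i p_j − q_j p_i)² + c_i q_j²/q_i² + c_j q_i²/q_j²] + ∑_{i≤k} c_i`
equals `h₋^(k) h₊^(k) − (h₃^(k))²`, where `h₋^(k) = ∑_{i≤k} q_i²`,
`h₊^(k) = ∑_{i≤k} (p_i² + c_i/q_i²)`, `h₃^(k) = ∑_{i≤k} q_i p_i`
(on the set where `q_i ≠ 0` whenever `c_i ≠ 0`). -/
theorem casimir_coproduct_identity (n k : ℕ) (hk2 : 2 ≤ k) (hkn : k ≤ n)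
    (c : Fin n → ℝ) (q p : Fin n → ℝ) (hq : ∀ i, c i ≠ 0 → q i ≠ 0) :
    (∑ i ∈ univ.filter (fun i : Fin n => (i : ℕ) < k),
       ∑ j ∈ univ.filter (fun j : Fin n => (j : ℕ) < k),
         (if i < j then
            (q i * p j - q j * p i) ^ 2 +
              c i * (q j) ^ 2 / (q i) ^ 2 + c j * (q i) ^ 2 / (q j) ^ 2
          else 0)) +
      ∑ i ∈ univ.filter (fun i : Fin n => (i : ℕ) < k), c i =
    (∑ i ∈ univ.filter (fun i : Fin n => (i : ℕ) < k), (q i) ^ 2) *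
      (∑ i ∈ univ.filter (fun i : Fin n => (i : ℕ) < k),
        ((p i) ^ 2 + c i / (q i) ^ 2)) -
      (∑ i ∈ univ.filter (fun i : Fin n => (i : ℕ) < k), q i * p i) ^ 2 := by
  set s := univ.filter (fun i : Fin n => (i : ℕ) < k) with hs
  set F : Fin n → Fin n → ℝ := fun i j =>
    (q i)^2 * ((p j)^2 + c j/(q j)^2) - (q i * p i) * (q j * p j) with hF
  have hdiag : ∀ i, F i i = c i := by
    intro i
    by_cases h : c i = 0
    · simp [hF, h]; ring
    · have hqi := hq i h
      simp only [hF]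
      field_simp
      ring
  have hsym : ∀ i j : Fin n, i < j →
      F i j + F j i = (q i * p j - q j * p i) ^ 2 +
        c i * (q j) ^ 2 / (q i) ^ 2 + c j * (q i) ^ 2 / (q j) ^ 2 := by
    intro i j _
    simp only [hF]
    ring
  have hRHS : (∑ i ∈ s, (q i)^2) * (∑ i ∈ s, ((p i)^2 + c i/(q i)^2))
      - (∑ i ∈ s, q i * p i)^2 = ∑ i ∈ s, ∑ j ∈ s, F i j := by
    rw [Finset.sum_mul_sum, sq, Finset.sum_mul_sum, ← Finset.sum_sub_distrib]
    refine Finset.sum_congr rfl fun i _ => ?_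
    rw [← Finset.sum_sub_distrib]
  have hsplit : ∑ i ∈ s, ∑ j ∈ s, F i j =
      (∑ i ∈ s, ∑ j ∈ s, if i < j then F i j else 0) +
      (∑ i ∈ s, ∑ j ∈ s, if j < i then F i j else 0) +
      (∑ i ∈ s, ∑ j ∈ s, if i = j then F i j else 0) := by
    have h1 : ∀ i j : Fin n, F i j = (if i < j then F i j else 0) +
        (if j < i then F i j else 0) + (if i = j then F i j else 0) := by
      intro i j
      rcases lt_trichotomy i j with h|h|h
      · simp [h, h.ne, h.asymm]
      · simp [h]
      · simp [h, h.ne', h.asymm]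
    calc ∑ i ∈ s, ∑ j ∈ s, F i j
        = ∑ i ∈ s, ∑ j ∈ s, ((if i < j then F i j else 0) +
            (if j < i then F i j else 0) + (if i = j then F i j else 0)) :=
          Finset.sum_congr rfl fun i _ => Finset.sum_congr rfl fun j _ => h1 i j
      _ = _ := by simp only [Finset.sum_add_distrib]
  have hswap : (∑ i ∈ s, ∑ j ∈ s, if j < i then F i j else 0)
      = ∑ i ∈ s, ∑ j ∈ s, if i < j then F j i else 0 := by
    rw [Finset.sum_comm]
  have hdiagsum : (∑ i ∈ s, ∑ j ∈ s, if i = j then F i j else 0) = ∑ i ∈ s, c i := by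
    refine Finset.sum_congr rfl fun i hi => ?_
    rw [Finset.sum_ite_eq, if_pos hi, hdiag]
  have hcomb : (∑ i ∈ s, ∑ j ∈ s, if i < j then F i j else 0) +
      (∑ i ∈ s, ∑ j ∈ s, if i < j then F j i else 0)
      = ∑ i ∈ s, ∑ j ∈ s, (if i < j then
            (q i * p j - q j * p i) ^ 2 +
              c i * (q j) ^ 2 / (q i) ^ 2 + c j * (q i) ^ 2 / (q j) ^ 2
          else 0) := by
    rw [← Finset.sum_add_distrib]
    refine Finset.sum_congr rfl fun i _ => ?_
    rw [← Finset.sum_add_distrib]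
    refine Finset.sum_congr rfl fun j _ => ?_
    split_ifs with h
    · exact hsym i j h
    · simp
  rw [hRHS, hsplit, hswap, hdiagsum, hcomb]
end

section
/- For each k with 2 ≤ k ≤ n, the function I_L^(k) = h₋^(k) h₊^(k) − (h₃^(k))² (with h₋^(k) = ∑_{i≤k} q_i², h₊^(k) = ∑_{i≤k}(p_i² + c_i/q_i²), h₃^(k) = ∑_{i≤k} q_i p_i) Poisson-commutes with each of the full functions h₋ = ∑_{i=1}^n q_i², h₊ = ∑_{i=1}^n (p_i² + c_i/q_i²), h₃ = ∑_{i=1}^n q_i p_i, i.e. {I_L^(k), h₋} = {I_L^(k), h₊} = {I_L^(k), h₃} = 0. -/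
open Finset

lemma sum_update_eq {n : ℕ} (s : Finset (Fin n)) (g : Fin n → ℝ → ℝ)
    (q : Fin n → ℝ) (j : Fin n) (t : ℝ) :
    ∑ i ∈ s, g i (Function.update q j t i) =
      (if j ∈ s then g j t - g j (q j) else 0) + ∑ i ∈ s, g i (q i) := by
  by_cases hj : j ∈ s
  · simp only [hj, if_true]
    have h1 : ∑ i ∈ s, g i (Function.update q j t i)
        = ∑ i ∈ s, (g i (q i) + if i = j then g j t - g j (q j) else 0) := by
      refine Finset.sum_congr rfl fun i hi => ?_
      by_cases h : i = j
      · subst h; simp [Function.update_self]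
      · simp [Function.update_of_ne h, h]
    rw [h1, Finset.sum_add_distrib, Finset.sum_ite_eq' s j]
    simp [hj]; ring
  · rw [if_neg hj, zero_add]
    refine Finset.sum_congr rfl fun i hi => ?_
    have h : i ≠ j := fun h => hj (h ▸ hi)
    rw [Function.update_of_ne h]

lemma hasDerivAt_sum_update {n : ℕ} (s : Finset (Fin n)) (g : Fin n → ℝ → ℝ)
    (q : Fin n → ℝ) (j : Fin n) (d : ℝ) (hd : HasDerivAt (g j) d (q j)) :
    HasDerivAt (fun t => ∑ i ∈ s, g i (Function.update q j t i))
      (if j ∈ s then d else 0) (q j) := by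
  have heq : (fun t => ∑ i ∈ s, g i (Function.update q j t i)) =
      fun t => (if j ∈ s then g j t - g j (q j) else 0) + ∑ i ∈ s, g i (q i) := by
    funext t; exact sum_update_eq s g q j t
  rw [heq]
  by_cases hj : j ∈ s
  · simp only [hj, if_true]
    exact (hd.sub_const _).add_const _
  · simp only [hj, if_false]
    simpa using hasDerivAt_const (q j) ((0:ℝ) + ∑ i ∈ s, g i (q i))

/-- For `2 ≤ k ≤ n`, the function `I_L^(k) = h₋^(k) h₊^(k) − (h₃^(k))²`
(built from the partial sums over the first `k` indices) Poisson-commutes with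
each of the full functions `h₋ = ∑ q_i²`, `h₊ = ∑ (p_i² + c_i/q_i²)`,
`h₃ = ∑ q_i p_i` (on the set where `q_i ≠ 0` whenever `c_i ≠ 0`). -/
theorem left_casimir_commutes_with_sl2 (n k : ℕ) (hk2 : 2 ≤ k) (hkn : k ≤ n)
    (c : Fin n → ℝ)
    (ILk hminus hplus h3 : (Fin n → ℝ) → (Fin n → ℝ) → ℝ)
    (hILk : ILk = fun q p =>
      (∑ i ∈ univ.filter (fun i : Fin n => (i : ℕ) < k), (q i) ^ 2) *
        (∑ i ∈ univ.filter (fun i : Fin n => (i : ℕ) < k),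
          ((p i) ^ 2 + c i / (q i) ^ 2)) -
        (∑ i ∈ univ.filter (fun i : Fin n => (i : ℕ) < k), q i * p i) ^ 2)
    (hhm : hminus = fun q _ => ∑ i, (q i) ^ 2)
    (hhp : hplus = fun q p => ∑ i, ((p i) ^ 2 + c i / (q i) ^ 2))
    (hh3 : h3 = fun q p => ∑ i, q i * p i)
    (q p : Fin n → ℝ) (hq : ∀ i, c i ≠ 0 → q i ≠ 0) :
    pbracket n ILk hminus q p = 0 ∧
    pbracket n ILk hplus q p = 0 ∧
    pbracket n ILk h3 q p = 0 := by
  subst hILk hhm hhp hh3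
  set S : Finset (Fin n) := univ.filter (fun i : Fin n => (i : ℕ) < k) with hSdef
  set A : ℝ := ∑ i ∈ S, (q i) ^ 2 with hAdef
  set B : ℝ := ∑ i ∈ S, ((p i) ^ 2 + c i / (q i) ^ 2) with hBdef
  set C : ℝ := ∑ i ∈ S, q i * p i with hCdef
  -- basic one-variable derivative facts
  have hsq : ∀ x : ℝ, HasDerivAt (fun t : ℝ => t ^ 2) (2 * x) x := by
    intro x; simpa using hasDerivAt_pow 2 x
  have hinv : ∀ j : Fin n, HasDerivAt (fun t : ℝ => (p j) ^ 2 + c j / t ^ 2)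
      (-2 * c j / (q j) ^ 3) (q j) := by
    intro j
    by_cases hc : c j = 0
    · simpa [hc] using hasDerivAt_const (q j) ((p j) ^ 2)
    · have hq0 := hq j hc
      have h2 := (hasDerivAt_const (q j) (c j)).div (hsq (q j)) (pow_ne_zero 2 hq0)
      have h4 := h2.const_add ((p j) ^ 2)
      refine h4.congr_deriv ?_
      field_simp
      ring
  -- q-direction HasDerivAt for the three partial sums
  have hAq : ∀ j, HasDerivAt (fun t => ∑ i ∈ S, (Function.update q j t i) ^ 2)
      (if j ∈ S then 2 * q j else 0) (q j) :=
    fun j => hasDerivAt_sum_update S (fun _ t => t ^ 2) q j _ (hsq (q j))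
  have hBq : ∀ j, HasDerivAt
      (fun t => ∑ i ∈ S, ((p i) ^ 2 + c i / (Function.update q j t i) ^ 2))
      (if j ∈ S then -2 * c j / (q j) ^ 3 else 0) (q j) :=
    fun j => hasDerivAt_sum_update S (fun i t => (p i) ^ 2 + c i / t ^ 2) q j _ (hinv j)
  have hCq : ∀ j, HasDerivAt (fun t => ∑ i ∈ S, Function.update q j t i * p i)
      (if j ∈ S then p j else 0) (q j) :=
    fun j => hasDerivAt_sum_update S (fun i t => t * p i) q j _
      (by simpa using (hasDerivAt_id (q j)).mul_const (p j))
  -- p-direction HasDerivAt for the two partial sums depending on p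
  have hBp : ∀ j, HasDerivAt
      (fun t => ∑ i ∈ S, ((Function.update p j t i) ^ 2 + c i / (q i) ^ 2))
      (if j ∈ S then 2 * p j else 0) (p j) :=
    fun j => hasDerivAt_sum_update S (fun i t => t ^ 2 + c i / (q i) ^ 2) p j _
      ((hsq (p j)).add_const _)
  have hCp : ∀ j, HasDerivAt (fun t => ∑ i ∈ S, q i * Function.update p j t i)
      (if j ∈ S then q j else 0) (p j) :=
    fun j => hasDerivAt_sum_update S (fun i t => q i * t) p j _
      (by simpa using (hasDerivAt_id (p j)).const_mul (q j))
  -- pd of I_L^(k) in the q-direction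
  have pdqIL : ∀ j, pd (fun q' =>
      (∑ i ∈ S, (q' i) ^ 2) * (∑ i ∈ S, ((p i) ^ 2 + c i / (q' i) ^ 2)) -
        (∑ i ∈ S, q' i * p i) ^ 2) q j
      = if j ∈ S then
          2 * q j * B + A * (-2 * c j / (q j) ^ 3) - 2 * C * p j
        else 0 := by
    intro j
    have h := (((hAq j).mul (hBq j)).sub ((hCq j).pow 2)).deriv
    simp only [Function.update_eq_self] at h
    rw [pd] at *
    refine h.trans ?_
    split_ifs with hj <;> push_cast <;> ring
  -- pd of I_L^(k) in the p-direction
  have pdpIL : ∀ j, pd (fun p' =>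
      (∑ i ∈ S, (q i) ^ 2) * (∑ i ∈ S, ((p' i) ^ 2 + c i / (q i) ^ 2)) -
        (∑ i ∈ S, q i * p' i) ^ 2) p j
      = if j ∈ S then A * (2 * p j) - 2 * C * q j else 0 := by
    intro j
    have h := (((hasDerivAt_const (p j) A).mul (hBp j)).sub ((hCp j).pow 2)).deriv
    simp only [Function.update_eq_self] at h
    rw [pd] at *
    refine h.trans ?_
    split_ifs with hj <;> push_cast <;> ring
  -- pd of the full Hamiltonians
  have pdq_hm : ∀ j, pd (fun q' => ∑ i, (q' i) ^ 2) q j = 2 * q j := by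
    intro j
    have h := (hasDerivAt_sum_update univ (fun _ t => t ^ 2) q j _ (hsq (q j))).deriv
    rw [pd]; simpa using h
  have pdp_hm : ∀ j, pd (fun _ : Fin n → ℝ => ∑ i, (q i) ^ 2) p j = 0 := by
    intro j; rw [pd]; simp
  have pdq_hp : ∀ j, pd (fun q' => ∑ i, ((p i) ^ 2 + c i / (q' i) ^ 2)) q j
      = -2 * c j / (q j) ^ 3 := by
    intro j
    have h := (hasDerivAt_sum_update univ (fun i t => (p i) ^ 2 + c i / t ^ 2) q j _
      (hinv j)).deriv
    rw [pd]; simpa using h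
  have pdp_hp : ∀ j, pd (fun p' => ∑ i, ((p' i) ^ 2 + c i / (q i) ^ 2)) p j
      = 2 * p j := by
    intro j
    have h := (hasDerivAt_sum_update univ (fun i t => t ^ 2 + c i / (q i) ^ 2) p j _
      ((hsq (p j)).add_const _)).deriv
    rw [pd]; simpa using h
  have pdq_h3 : ∀ j, pd (fun q' => ∑ i, q' i * p i) q j = p j := by
    intro j
    have h := (hasDerivAt_sum_update univ (fun i t => t * p i) q j _
      (by simpa using (hasDerivAt_id (q j)).mul_const (p j))).deriv
    rw [pd]; simpa using h
  have pdp_h3 : ∀ j, pd (fun p' => ∑ i, q i * p' i) p j = q j := by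
    intro j
    have h := (hasDerivAt_sum_update univ (fun i t => q i * t) p j _
      (by simpa using (hasDerivAt_id (p j)).const_mul (q j))).deriv
    rw [pd]; simpa using h
  refine ⟨?_, ?_, ?_⟩
  · -- bracket with h₋
    simp only [pbracket]
    simp only [pdqIL, pdpIL, pdq_hm, pdp_hm]
    have step : ∀ j : Fin n,
        ((if j ∈ S then 2 * q j * B + A * (-2 * c j / (q j) ^ 3) - 2 * C * p j else 0) * 0 -
          2 * q j * (if j ∈ S then A * (2 * p j) - 2 * C * q j else 0))
        = if j ∈ S then (-4 * A) * (q j * p j) + (4 * C) * (q j) ^ 2 else 0 := by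
      intro j; split_ifs with hj <;> ring
    rw [Finset.sum_congr rfl fun j _ => step j, Finset.sum_ite_mem, Finset.univ_inter,
      Finset.sum_add_distrib, ← Finset.mul_sum, ← Finset.mul_sum, ← hCdef, ← hAdef]
    ring
  · -- bracket with h₊
    simp only [pbracket]
    simp only [pdqIL, pdpIL, pdq_hp, pdp_hp]
    have step : ∀ j : Fin n,
        ((if j ∈ S then 2 * q j * B + A * (-2 * c j / (q j) ^ 3) - 2 * C * p j else 0) *
            (2 * p j) -
          (-2 * c j / (q j) ^ 3) * (if j ∈ S then A * (2 * p j) - 2 * C * q j else 0))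
        = if j ∈ S then (4 * B) * (q j * p j) - (4 * C) * ((p j) ^ 2 + c j / (q j) ^ 2)
          else 0 := by
      intro j
      split_ifs with hj
      · by_cases hc : c j = 0
        · simp only [hc]; ring
        · have hq0 := hq j hc
          field_simp
          ring
      · ring
    rw [Finset.sum_congr rfl fun j _ => step j, Finset.sum_ite_mem, Finset.univ_inter,
      Finset.sum_sub_distrib, ← Finset.mul_sum, ← Finset.mul_sum, ← hCdef, ← hBdef]
    ring
  · -- bracket with h₃
    simp only [pbracket]
    simp only [pdqIL, pdpIL, pdq_h3, pdp_h3]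
    have step : ∀ j : Fin n,
        ((if j ∈ S then 2 * q j * B + A * (-2 * c j / (q j) ^ 3) - 2 * C * p j else 0) *
            q j -
          p j * (if j ∈ S then A * (2 * p j) - 2 * C * q j else 0))
        = if j ∈ S then (2 * B) * (q j) ^ 2 - (2 * A) * ((p j) ^ 2 + c j / (q j) ^ 2)
          else 0 := by
      intro j
      split_ifs with hj
      · by_cases hc : c j = 0
        · simp only [hc]; ring
        · have hq0 := hq j hc
          field_simp
          ring
      · ring
    rw [Finset.sum_congr rfl fun j _ => step j, Finset.sum_ite_mem, Finset.univ_inter,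
      Finset.sum_sub_distrib, ← Finset.mul_sum, ← Finset.mul_sum, ← hBdef, ← hAdef]
    ring
end

section
/- The left-invariants are in involution: for 2 ≤ k ≤ l ≤ n, the functions I_L^(k) = h₋^(k) h₊^(k) − (h₃^(k))² and I_L^(l) = h₋^(l) h₊^(l) − (h₃^(l))² (defined with partial sums over the first k, respectively first l, indices) satisfy {I_L^(k), I_L^(l)} = 0 with respect to the canonical Poisson bracket on T*ℝⁿ. -/
open Finset

/-- The left-invariant `I_L^(k) = h₋^(k) h₊^(k) − (h₃^(k))²` built from the
partial sums over the first `k` indices. -/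
noncomputable def IL (n k : ℕ) (c : Fin n → ℝ)
    (q p : Fin n → ℝ) : ℝ :=
  (∑ i ∈ univ.filter (fun i : Fin n => (i : ℕ) < k), (q i) ^ 2) *
    (∑ i ∈ univ.filter (fun i : Fin n => (i : ℕ) < k),
      ((p i) ^ 2 + c i / (q i) ^ 2)) -
    (∑ i ∈ univ.filter (fun i : Fin n => (i : ℕ) < k), q i * p i) ^ 2

lemma key_div (a b : ℝ) : a / b ^ 3 * b = a / b ^ 2 := by
  rcases eq_or_ne b 0 with h | h
  · simp [h]
  · field_simp

lemma pd_IL_q (n k : ℕ) (c q p : Fin n → ℝ) (hq : ∀ i, c i ≠ 0 → q i ≠ 0) (j : Fin n) :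
    pd (fun q' => IL n k c q' p) q j =
    if (j : ℕ) < k then
      2 * q j * (∑ i ∈ univ.filter (fun i : Fin n => (i : ℕ) < k), ((p i) ^ 2 + c i / (q i) ^ 2))
        - 2 * c j / (q j) ^ 3 * (∑ i ∈ univ.filter (fun i : Fin n => (i : ℕ) < k), (q i) ^ 2)
        - 2 * (∑ i ∈ univ.filter (fun i : Fin n => (i : ℕ) < k), q i * p i) * p j
    else 0 := by
  classical
  set S := univ.filter (fun i : Fin n => (i : ℕ) < k) with hS
  unfold pd
  by_cases hj : (j : ℕ) < k
  · rw [if_pos hj]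
    have hjS : j ∈ S := by simp [hS, hj]
    have hsplit : ∀ g : Fin n → ℝ, ∑ i ∈ S, g i = g j + ∑ i ∈ S.erase j, g i :=
      fun g => (Finset.add_sum_erase S g hjS).symm
    set Aj := ∑ i ∈ S.erase j, (q i) ^ 2 with hAj
    set Bj := ∑ i ∈ S.erase j, ((p i) ^ 2 + c i / (q i) ^ 2) with hBj
    set Cj := ∑ i ∈ S.erase j, q i * p i with hCj
    have hfun : (fun t => IL n k c (Function.update q j t) p) =
        fun t => (t ^ 2 + Aj) * ((p j) ^ 2 + c j / t ^ 2 + Bj) - (t * p j + Cj) ^ 2 := by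
      funext t
      have e1 : ∑ i ∈ S.erase j, (Function.update q j t i) ^ 2 = Aj :=
        Finset.sum_congr rfl fun i hi => by
          rw [Function.update_of_ne (Finset.ne_of_mem_erase hi)]
      have e2 : ∑ i ∈ S.erase j, ((p i) ^ 2 + c i / (Function.update q j t i) ^ 2) = Bj :=
        Finset.sum_congr rfl fun i hi => by
          rw [Function.update_of_ne (Finset.ne_of_mem_erase hi)]
      have e3 : ∑ i ∈ S.erase j, Function.update q j t i * p i = Cj :=
        Finset.sum_congr rfl fun i hi => by
          rw [Function.update_of_ne (Finset.ne_of_mem_erase hi)]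
      unfold IL
      rw [← hS,
        hsplit (fun i => (Function.update q j t i) ^ 2),
        hsplit (fun i => (p i) ^ 2 + c i / (Function.update q j t i) ^ 2),
        hsplit (fun i => Function.update q j t i * p i),
        e1, e2, e3]
      simp only [Function.update_self]
    rw [hfun]
    have h2 : HasDerivAt (fun t : ℝ => c j / t ^ 2) (-2 * c j / (q j) ^ 3) (q j) := by
      rcases eq_or_ne (c j) 0 with hc | hc
      · have h0 : (fun t : ℝ => c j / t ^ 2) = fun _ => (0 : ℝ) := by
          funext t; rw [hc, zero_div]
        have h1 : (-2 * c j / (q j) ^ 3) = 0 := by rw [hc]; ring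
        rw [h0, h1]
        exact hasDerivAt_const _ _
      · have hqj := hq j hc
        have : HasDerivAt (fun t : ℝ => c j / t ^ 2) _ (q j) :=
          (hasDerivAt_const (q j) (c j)).div (hasDerivAt_pow 2 (q j))
          (pow_ne_zero 2 hqj)
        convert this using 1
        rw [div_eq_div_iff (pow_ne_zero 3 hqj) (pow_ne_zero 2 (pow_ne_zero 2 hqj))]
        have e : (2 : ℕ) - 1 = 1 := rfl
        rw [e]
        push_cast
        ring
    have hA : HasDerivAt (fun t : ℝ => t ^ 2 + Aj) (2 * q j) (q j) := by
      simpa using (hasDerivAt_pow 2 (q j)).add_const Aj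
    have hB : HasDerivAt (fun t : ℝ => (p j) ^ 2 + c j / t ^ 2 + Bj)
        (-2 * c j / (q j) ^ 3) (q j) := (h2.const_add ((p j) ^ 2)).add_const Bj
    have hCin : HasDerivAt (fun t : ℝ => t * p j + Cj) (p j) (q j) := by
      simpa using ((hasDerivAt_id (q j)).mul_const (p j)).add_const Cj
    have hC : HasDerivAt (fun t : ℝ => (t * p j + Cj) ^ 2)
        ((2 : ℕ) * (q j * p j + Cj) ^ 1 * p j) (q j) := hCin.pow 2
    have htot : HasDerivAt (fun t => (t ^ 2 + Aj) * (p j ^ 2 + c j / t ^ 2 + Bj) - (t * p j + Cj) ^ 2) _ (q j) := (hA.mul hB).sub hC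
    rw [htot.deriv]
    rw [hsplit (fun i => (q i) ^ 2), hsplit (fun i => (p i) ^ 2 + c i / (q i) ^ 2),
      hsplit (fun i => q i * p i), ← hAj, ← hBj, ← hCj]
    push_cast
    ring
  · rw [if_neg hj]
    have hfun : (fun t => IL n k c (Function.update q j t) p) =
        fun _ => IL n k c q p := by
      funext t
      have hne : ∀ i ∈ S, i ≠ j := by
        intro i hi hij
        rw [hS, Finset.mem_filter] at hi
        exact hj (hij ▸ hi.2)
      have e1 : ∑ i ∈ S, (Function.update q j t i) ^ 2 = ∑ i ∈ S, (q i) ^ 2 :=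
        Finset.sum_congr rfl fun i hi => by rw [Function.update_of_ne (hne i hi)]
      have e2 : ∑ i ∈ S, ((p i) ^ 2 + c i / (Function.update q j t i) ^ 2)
          = ∑ i ∈ S, ((p i) ^ 2 + c i / (q i) ^ 2) :=
        Finset.sum_congr rfl fun i hi => by rw [Function.update_of_ne (hne i hi)]
      have e3 : ∑ i ∈ S, Function.update q j t i * p i = ∑ i ∈ S, q i * p i :=
        Finset.sum_congr rfl fun i hi => by rw [Function.update_of_ne (hne i hi)]
      unfold IL
      rw [← hS, e1, e2, e3]
    rw [hfun, deriv_const]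

lemma pd_IL_p (n k : ℕ) (c q p : Fin n → ℝ) (j : Fin n) :
    pd (IL n k c q) p j =
    if (j : ℕ) < k then
      2 * p j * (∑ i ∈ univ.filter (fun i : Fin n => (i : ℕ) < k), (q i) ^ 2)
        - 2 * (∑ i ∈ univ.filter (fun i : Fin n => (i : ℕ) < k), q i * p i) * q j
    else 0 := by
  classical
  set S := univ.filter (fun i : Fin n => (i : ℕ) < k) with hS
  unfold pd
  by_cases hj : (j : ℕ) < k
  · rw [if_pos hj]
    have hjS : j ∈ S := by simp [hS, hj]
    have hsplit : ∀ g : Fin n → ℝ, ∑ i ∈ S, g i = g j + ∑ i ∈ S.erase j, g i :=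
      fun g => (Finset.add_sum_erase S g hjS).symm
    set Ak := ∑ i ∈ S, (q i) ^ 2 with hAk
    set Bj := ∑ i ∈ S.erase j, ((p i) ^ 2 + c i / (q i) ^ 2) with hBj
    set Cj := ∑ i ∈ S.erase j, q i * p i with hCj
    have hfun : (fun t => IL n k c q (Function.update p j t)) =
        fun t => Ak * (t ^ 2 + c j / (q j) ^ 2 + Bj) - (q j * t + Cj) ^ 2 := by
      funext t
      have e2 : ∑ i ∈ S.erase j, ((Function.update p j t i) ^ 2 + c i / (q i) ^ 2) = Bj :=
        Finset.sum_congr rfl fun i hi => by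
          rw [Function.update_of_ne (Finset.ne_of_mem_erase hi)]
      have e3 : ∑ i ∈ S.erase j, q i * Function.update p j t i = Cj :=
        Finset.sum_congr rfl fun i hi => by
          rw [Function.update_of_ne (Finset.ne_of_mem_erase hi)]
      unfold IL
      rw [← hS, ← hAk,
        hsplit (fun i => (Function.update p j t i) ^ 2 + c i / (q i) ^ 2),
        hsplit (fun i => q i * Function.update p j t i),
        e2, e3]
      simp only [Function.update_self]
    rw [hfun]
    have hB : HasDerivAt (fun t : ℝ => Ak * (t ^ 2 + c j / (q j) ^ 2 + Bj))
        (Ak * (2 * p j)) (p j) := by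
      have h1 : HasDerivAt (fun t : ℝ => t ^ 2 + c j / (q j) ^ 2 + Bj) (2 * p j) (p j) := by
        simpa using ((hasDerivAt_pow 2 (p j)).add_const (c j / (q j) ^ 2)).add_const Bj
      exact h1.const_mul Ak
    have hCin : HasDerivAt (fun t : ℝ => q j * t + Cj) (q j) (p j) := by
      simpa using ((hasDerivAt_id (p j)).const_mul (q j)).add_const Cj
    have hC : HasDerivAt (fun t : ℝ => (q j * t + Cj) ^ 2)
        ((2 : ℕ) * (q j * p j + Cj) ^ 1 * q j) (p j) := hCin.pow 2
    have htot : HasDerivAt (fun t => Ak * (t ^ 2 + c j / (q j) ^ 2 + Bj) - (q j * t + Cj) ^ 2) _ (p j) := hB.sub hC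
    rw [htot.deriv]
    rw [hsplit (fun i => q i * p i), ← hCj]
    push_cast
    ring
  · rw [if_neg hj]
    have hfun : (fun t => IL n k c q (Function.update p j t)) =
        fun _ => IL n k c q p := by
      funext t
      have hne : ∀ i ∈ S, i ≠ j := by
        intro i hi hij
        rw [hS, Finset.mem_filter] at hi
        exact hj (hij ▸ hi.2)
      have e2 : ∑ i ∈ S, ((Function.update p j t i) ^ 2 + c i / (q i) ^ 2)
          = ∑ i ∈ S, ((p i) ^ 2 + c i / (q i) ^ 2) :=
        Finset.sum_congr rfl fun i hi => by rw [Function.update_of_ne (hne i hi)]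
      have e3 : ∑ i ∈ S, q i * Function.update p j t i = ∑ i ∈ S, q i * p i :=
        Finset.sum_congr rfl fun i hi => by rw [Function.update_of_ne (hne i hi)]
      unfold IL
      rw [← hS, e2, e3]
    rw [hfun, deriv_const]

/-- The left-invariants are in involution: for `2 ≤ k ≤ l ≤ n`,
`{I_L^(k), I_L^(l)} = 0` with respect to the canonical Poisson bracket
(on the set where `q_i ≠ 0` whenever `c_i ≠ 0`). -/
theorem left_invariants_in_involution (n k l : ℕ)
    (hk2 : 2 ≤ k) (hkl : k ≤ l) (hln : l ≤ n) (c : Fin n → ℝ)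
    (q p : Fin n → ℝ) (hq : ∀ i, c i ≠ 0 → q i ≠ 0) :
    pbracket n (IL n k c) (IL n l c) q p = 0 := by
  classical
  unfold pbracket
  set Ak := ∑ i ∈ univ.filter (fun i : Fin n => (i : ℕ) < k), (q i) ^ 2 with hAk
  set Bk := ∑ i ∈ univ.filter (fun i : Fin n => (i : ℕ) < k), ((p i) ^ 2 + c i / (q i) ^ 2)
    with hBk
  set Ck := ∑ i ∈ univ.filter (fun i : Fin n => (i : ℕ) < k), q i * p i with hCk
  set Al := ∑ i ∈ univ.filter (fun i : Fin n => (i : ℕ) < l), (q i) ^ 2 with hAl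
  set Bl := ∑ i ∈ univ.filter (fun i : Fin n => (i : ℕ) < l), ((p i) ^ 2 + c i / (q i) ^ 2)
    with hBl
  set Cl := ∑ i ∈ univ.filter (fun i : Fin n => (i : ℕ) < l), q i * p i with hCl
  have hterm : ∀ i ∈ (univ : Finset (Fin n)),
      (pd (fun q' => IL n k c q' p) q i * pd (IL n l c q) p i -
        pd (fun q' => IL n l c q' p) q i * pd (IL n k c q) p i) =
      if (i : ℕ) < k then
        ((2 * q i * Bk - 2 * c i / (q i) ^ 3 * Ak - 2 * Ck * p i) *
          (2 * p i * Al - 2 * Cl * q i) -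
        (2 * q i * Bl - 2 * c i / (q i) ^ 3 * Al - 2 * Cl * p i) *
          (2 * p i * Ak - 2 * Ck * q i))
      else 0 := by
    intro i _
    rw [pd_IL_q n k c q p hq i, pd_IL_q n l c q p hq i, pd_IL_p n k c q p i,
      pd_IL_p n l c q p i, ← hAk, ← hBk, ← hCk, ← hAl, ← hBl, ← hCl]
    by_cases h : (i : ℕ) < k
    · have hl : (i : ℕ) < l := lt_of_lt_of_le h hkl
      simp only [if_pos h, if_pos hl]
    · simp only [if_neg h]
      ring
  rw [Finset.sum_congr rfl hterm, ← Finset.sum_filter]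
  have hG : ∀ i : Fin n,
      ((2 * q i * Bk - 2 * c i / (q i) ^ 3 * Ak - 2 * Ck * p i) *
          (2 * p i * Al - 2 * Cl * q i) -
        (2 * q i * Bl - 2 * c i / (q i) ^ 3 * Al - 2 * Cl * p i) *
          (2 * p i * Ak - 2 * Ck * q i)) =
      q i * p i * (4 * (Bk * Al - Bl * Ak)) + ((q i) ^ 2 * (-(4 * (Bk * Cl - Bl * Ck))) +
        ((p i) ^ 2 * (-(4 * (Ck * Al - Cl * Ak))) +
          c i / (q i) ^ 2 * (4 * (Ak * Cl - Al * Ck)))) := by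
    intro i
    have h := key_div (c i) (q i)
    linear_combination (4 * (Ak * Cl - Al * Ck)) * h
  rw [Finset.sum_congr rfl (fun i _ => hG i)]
  rw [Finset.sum_add_distrib, Finset.sum_add_distrib, Finset.sum_add_distrib,
    ← Finset.sum_mul, ← Finset.sum_mul, ← Finset.sum_mul, ← Finset.sum_mul,
    ← hAk, ← hCk]
  have hBsplit : Bk = (∑ i ∈ univ.filter (fun i : Fin n => (i : ℕ) < k), (p i) ^ 2) +
      ∑ i ∈ univ.filter (fun i : Fin n => (i : ℕ) < k), c i / (q i) ^ 2 := by
    rw [hBk, Finset.sum_add_distrib]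
  set Pk := ∑ i ∈ univ.filter (fun i : Fin n => (i : ℕ) < k), (p i) ^ 2 with hPk
  set Dk := ∑ i ∈ univ.filter (fun i : Fin n => (i : ℕ) < k), c i / (q i) ^ 2 with hDk
  linear_combination (4 * (Ck * Al - Ak * Cl)) * hBsplit
end
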